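/- Let ρ > 0, m ∈ ℝⁿ, U ∈ Sym₀ⁿ, q ∈ ℝ, and suppose λ_max((m⊗m)/ρ − U) ≤ χ/n, |m|² = ρχ, and q = p(ρ) + χ/n for some χ > 0. Then U = (m⊗m)/ρ − (|m|²/(nρ))Iₙ, i.e., (m, U, q) belongs to the constraint set K_{ρ,χ}. -/

import Mathlib

open Matrix

noncomputable def lambdaMax {n : ℕ} (S : Matrix (Fin n) (Fin n) ℝ) : ℝ :=
  sSup {r : ℝ | ∃ v : Fin n → ℝ, (∑ i, v i ^ 2) = 1 ∧ r = v ⬝ᵥ S.mulVec v}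

theorem stmt_15 {n : ℕ} (hn : 0 < n) (p : ℝ → ℝ) (ρ χ q : ℝ) (hρ : 0 < ρ) (hχ : 0 < χ)
    (m : Fin n → ℝ) (U : Matrix (Fin n) (Fin n) ℝ) (hU : U.IsSymm) (hU0 : U.trace = 0)
    (hlam : lambdaMax (ρ⁻¹ • vecMulVec m m - U) ≤ χ / n)
    (hm : (∑ i, m i ^ 2) = ρ * χ)
    (hq : q = p ρ + χ / n) :
    U = ρ⁻¹ • vecMulVec m m
        - ((∑ i, m i ^ 2) / (n * ρ)) • (1 : Matrix (Fin n) (Fin n) ℝ) := by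
  have hn0 : (n : ℝ) ≠ 0 := Nat.cast_ne_zero.mpr hn.ne'
  set S : Matrix (Fin n) (Fin n) ℝ := ρ⁻¹ • vecMulVec m m - U with hSdef
  -- quadratic form bound on one-hot vectors etc.
  -- Step 1: the sup set is bounded above
  have hbdd : BddAbove {r : ℝ | ∃ v : Fin n → ℝ, (∑ i, v i ^ 2) = 1 ∧ r = v ⬝ᵥ S.mulVec v} := by
    refine ⟨∑ i, ∑ j, |S i j|, ?_⟩
    rintro r ⟨v, hv, rfl⟩
    have habs : ∀ i, |v i| ≤ 1 := by
      intro i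
      have h1 : v i ^ 2 ≤ 1 := by
        rw [← hv]
        exact Finset.single_le_sum (fun j _ => sq_nonneg (v j)) (Finset.mem_univ i)
      nlinarith [abs_nonneg (v i), sq_abs (v i)]
    have : v ⬝ᵥ S.mulVec v = ∑ i, ∑ j, v i * (S i j * v j) := by
      simp [dotProduct, Matrix.mulVec, Finset.mul_sum]
    rw [this]
    refine Finset.sum_le_sum fun i _ => Finset.sum_le_sum fun j _ => ?_
    calc v i * (S i j * v j) ≤ |v i * (S i j * v j)| := le_abs_self _
      _ = |v i| * |S i j| * |v j| := by rw [abs_mul, abs_mul]; ring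
      _ ≤ 1 * |S i j| * 1 := by
          have h1 := habs i; have h2 := habs j
          gcongr <;> positivity
      _ = |S i j| := by ring
  -- Step 2: quadratic form bound on unit vectors
  have hunit : ∀ v : Fin n → ℝ, (∑ i, v i ^ 2) = 1 → v ⬝ᵥ S.mulVec v ≤ χ / n := by
    intro v hv
    exact le_trans (le_csSup hbdd ⟨v, hv, rfl⟩) hlam
  -- Step 3: scale to all vectors
  have hall : ∀ v : Fin n → ℝ, v ⬝ᵥ S.mulVec v ≤ (χ / n) * ∑ i, v i ^ 2 := by
    intro v
    by_cases hv0 : v = 0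
    · simp [hv0]
    · have hs : 0 < ∑ i, v i ^ 2 := by
        obtain ⟨i, hi⟩ := Function.ne_iff.mp hv0
        exact Finset.sum_pos' (fun j _ => sq_nonneg _)
          ⟨i, Finset.mem_univ i, lt_of_le_of_ne (sq_nonneg _) (Ne.symm (pow_ne_zero 2 hi))⟩
      set s := ∑ i, v i ^ 2 with hsdef
      set w : Fin n → ℝ := (Real.sqrt s)⁻¹ • v with hwdef
      have hsq : Real.sqrt s ^ 2 = s := Real.sq_sqrt hs.le
      have hsqpos : 0 < Real.sqrt s := Real.sqrt_pos.mpr hs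
      have hw1 : (∑ i, w i ^ 2) = 1 := by
        simp only [hwdef, Pi.smul_apply, smul_eq_mul, mul_pow, ← Finset.mul_sum]
        rw [← hsdef, inv_pow, hsq, inv_mul_cancel₀ hs.ne']
      have hqw : w ⬝ᵥ S.mulVec w = (Real.sqrt s)⁻¹ ^ 2 * (v ⬝ᵥ S.mulVec v) := by
        simp [hwdef, Matrix.mulVec_smul, smul_dotProduct, dotProduct_smul, smul_eq_mul]
        ring
      have := hunit w hw1
      rw [hqw] at this
      have h2 : (Real.sqrt s)⁻¹ ^ 2 = s⁻¹ := by rw [inv_pow, hsq]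
      rw [h2] at this
      calc v ⬝ᵥ S.mulVec v = s * (s⁻¹ * (v ⬝ᵥ S.mulVec v)) := by
            field_simp
        _ ≤ s * (χ / n) := by
            exact mul_le_mul_of_nonneg_left this hs.le
        _ = (χ / n) * s := by ring
  -- T = S - (χ/n) I
  set T : Matrix (Fin n) (Fin n) ℝ := S - (χ / n) • 1 with hTdef
  have hTform : ∀ v : Fin n → ℝ, v ⬝ᵥ T.mulVec v ≤ 0 := by
    intro v
    have hid : v ⬝ᵥ ((χ / n) • (1 : Matrix (Fin n) (Fin n) ℝ)).mulVec v
        = (χ / n) * ∑ i, v i ^ 2 := by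
      simp only [Matrix.smul_mulVec, Matrix.one_mulVec, dotProduct, Pi.smul_apply,
        smul_eq_mul]
      rw [Finset.mul_sum]
      exact Finset.sum_congr rfl fun i _ => by ring
    have : v ⬝ᵥ T.mulVec v = v ⬝ᵥ S.mulVec v - (χ / n) * ∑ i, v i ^ 2 := by
      rw [hTdef, Matrix.sub_mulVec, dotProduct_sub, hid]
    rw [this]
    linarith [hall v]
  -- T is symmetric
  have hSsymm : T.IsSymm := by
    rw [Matrix.IsSymm, hTdef, hSdef]
    have h1 : (vecMulVec m m)ᵀ = vecMulVec m m := by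
      ext i j; simp [Matrix.vecMulVec_apply, mul_comm]
    rw [Matrix.transpose_sub, Matrix.transpose_sub, Matrix.transpose_smul,
      Matrix.transpose_smul, h1, hU, Matrix.transpose_one]
  -- trace T = 0
  have hTtr : T.trace = 0 := by
    have h1 : (vecMulVec m m).trace = ∑ i, m i ^ 2 := by
      simp [Matrix.trace, Matrix.diag, Matrix.vecMulVec_apply, sq]
    rw [hTdef, hSdef]
    rw [Matrix.trace_sub, Matrix.trace_sub, Matrix.trace_smul, Matrix.trace_smul,
      Matrix.trace_one, h1, hU0, hm]
    simp only [smul_eq_mul]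
    field_simp
    simp
  -- diagonal entries are zero
  have hdiag : ∀ i, T i i = 0 := by
    have hle : ∀ i, T i i ≤ 0 := by
      intro i
      have := hTform (Pi.single i 1)
      simpa [Matrix.mulVec_single, single_dotProduct] using this
    have hsum : ∑ i, T i i = 0 := hTtr
    intro i
    have := (Finset.sum_eq_zero_iff_of_nonpos (fun j _ => hle j)).mp hsum i (Finset.mem_univ i)
    exact this
  -- off-diagonal entries are zero
  have hoff : ∀ i j, T i j = 0 := by
    intro i j
    by_cases hij : i = j
    · subst hij; exact hdiag i
    · have hsymm : T j i = T i j := by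
        have := congrFun (congrFun hSsymm i) j
        simpa [Matrix.transpose_apply] using this
      have hplus := hTform (Pi.single i 1 + Pi.single j 1)
      have hminus := hTform (Pi.single i 1 - Pi.single j 1)
      have e1 : (Pi.single i (1:ℝ) + Pi.single j 1) ⬝ᵥ
          T.mulVec (Pi.single i 1 + Pi.single j 1)
          = T i i + T i j + T j i + T j j := by
        simp [Matrix.mulVec_add, Matrix.mulVec_single, dotProduct_add, add_dotProduct,
          single_dotProduct]
        ring
      have e2 : (Pi.single i (1:ℝ) - Pi.single j 1) ⬝ᵥ
          T.mulVec (Pi.single i 1 - Pi.single j 1)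
          = T i i - T i j - T j i + T j j := by
        simp [Matrix.mulVec_sub, Matrix.mulVec_single, dotProduct_sub, sub_dotProduct,
          single_dotProduct]
        ring
      rw [e1] at hplus
      rw [e2] at hminus
      have hii := hdiag i; have hjj := hdiag j
      linarith
  have hT0 : T = 0 := by
    ext i j; exact hoff i j
  -- conclude
  have hchi : (∑ i, m i ^ 2) / (n * ρ) = χ / n := by
    rw [hm]; field_simp
  rw [hchi]
  have hS1 : S = (χ / n) • 1 := by
    rw [hTdef, sub_eq_zero] at hT0
    exact hT0
  rw [hSdef] at hS1
  ext i j
  have h := congrFun (congrFun hS1 i) j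
  simp only [Matrix.sub_apply] at h ⊢
  linarith
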